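/- Let g be C² on [0,∞) with g(0)=0, g'>0, g''<0 on (0,x*), g''>0 on (x*,∞), and g'→∞ at infinity. Fix c > 0 and suppose (x̲_c, x̄_c) with 0 < x̲_c < x̄_c solves the smooth-fit system g'(x̲_c) = g'(x̄_c) = (g(x̄_c) - g(x̲_c))/(x̄_c - x̲_c - c). Then x̲_c < x* < x̄_c and x̄_c - x̲_c > c. -/

import Mathlib

theorem stmt14 (g : ℝ → ℝ) (xstar c xl xb : ℝ)
    (hC2 : ContDiffOn ℝ 2 g (Set.Ici 0))
    (h0 : g 0 = 0) (hd : ∀ x : ℝ, 0 ≤ x → 0 < deriv g x)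
    (hconc : ∀ x ∈ Set.Ioo 0 xstar, deriv (deriv g) x < 0)
    (hconv : ∀ x : ℝ, xstar < x → 0 < deriv (deriv g) x)
    (hinf : Filter.Tendsto (deriv g) Filter.atTop Filter.atTop)
    (hc : 0 < c) (hxl : 0 < xl) (hlt : xl < xb)
    (hsf1 : deriv g xl = deriv g xb)
    (hsf2 : deriv g xb = (g xb - g xl) / (xb - xl - c)) :
    xl < xstar ∧ xstar < xb ∧ c < xb - xl := by
  have hsub : Set.Icc xl xb ⊆ Set.Ioi (0:ℝ) := fun x hx => lt_of_lt_of_le hxl hx.1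
  have hsub' : Set.Icc xl xb ⊆ Set.Ici (0:ℝ) := fun x hx => Set.mem_Ici.2 (le_of_lt (hsub hx : (0:ℝ) < x))
  -- continuity of deriv g on Ioi 0
  have hcd : ContinuousOn (deriv g) (Set.Ioi (0:ℝ)) := by
    have := (hC2.mono (Set.Ioi_subset_Ici_self)).continuousOn_deriv_of_isOpen
      isOpen_Ioi one_le_two
    exact this
  have hcd' : ContinuousOn (deriv g) (Set.Icc xl xb) := hcd.mono hsub
  have hgc : ContinuousOn g (Set.Icc xl xb) := hC2.continuousOn.mono hsub'
  have hmem : xl ∈ Set.Icc xl xb := Set.left_mem_Icc.2 hlt.le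
  have hmem' : xb ∈ Set.Icc xl xb := Set.right_mem_Icc.2 hlt.le
  have h1 : xl < xstar := by
    by_contra h
    push_neg at h
    have hmono : StrictMonoOn (deriv g) (Set.Icc xl xb) := by
      apply strictMonoOn_of_deriv_pos (convex_Icc xl xb) hcd'
      intro x hx
      rw [interior_Icc] at hx
      exact hconv x (lt_of_le_of_lt h hx.1)
    exact absurd hsf1 (ne_of_lt (hmono hmem hmem' hlt))
  have h2 : xstar < xb := by
    by_contra h
    push_neg at h
    have hanti : StrictAntiOn (deriv g) (Set.Icc xl xb) := by
      apply strictAntiOn_of_deriv_neg (convex_Icc xl xb) hcd'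
      intro x hx
      rw [interior_Icc] at hx
      exact hconc x ⟨lt_trans hxl hx.1, lt_of_lt_of_le hx.2 h⟩
    exact absurd hsf1 (ne_of_gt (hanti hmem hmem' hlt))
  have hgmono : StrictMonoOn g (Set.Icc xl xb) := by
    apply strictMonoOn_of_deriv_pos (convex_Icc xl xb) hgc
    intro x hx
    rw [interior_Icc] at hx
    exact hd x (le_of_lt (lt_trans hxl hx.1))
  have hΔG : 0 < g xb - g xl := sub_pos.2 (hgmono hmem hmem' hlt)
  have hm : 0 < deriv g xb := hd xb (le_of_lt (lt_trans hxl hlt))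
  refine ⟨h1, h2, ?_⟩
  rcases lt_trichotomy (xb - xl - c) 0 with hne | hne | hne
  · exfalso
    have : deriv g xb < 0 := by
      rw [hsf2]
      exact div_neg_of_pos_of_neg hΔG hne
    linarith
  · exfalso
    rw [hne, div_zero] at hsf2
    linarith
  · linarith
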